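/- Consider Δω with g = Nat.succ on ℕ, and let φ : ℕ → ℕ be defined by φ n = Δω_succ n n n n. Then for every polynomial P with natural-number coefficients there exists n ∈ ℕ with P.eval n < φ n; in particular φ is not bounded above by any polynomial. -/

import Mathlib

/-- The paper's double-recursion operator `Δ^ω[g]` specialized to the successor on `ℕ`. -/
def Δωsucc : ℕ → ℕ → ℕ → ℕ → ℕ
  | 0, _, _, y => y + 1
  | _ + 1, 0, _, y => y
  | k + 1, r + 1, x, y => Δωsucc k x x (Δωsucc (k + 1) r x y)
  termination_by k r => (k, r)

/-- The diagonal function `φ(n) = Δ^ω[succ](n, n, n, n)` of the paper's Proposition 5.5. -/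
def φ (n : ℕ) : ℕ := Δωsucc n n n n

lemma dws : ∀ k r x y, Δωsucc (k+1) r x y = y + r * x ^ k := by
  intro k
  induction k with
  | zero =>
    intro r
    induction r with
    | zero => intro x y; simp [Δωsucc]
    | succ r ih =>
      intro x y
      rw [show (1:ℕ) = 0 + 1 from rfl, Δωsucc, ih]
      simp [Δωsucc]; ring
  | succ k ihk =>
    intro r
    induction r with
    | zero => intro x y; simp [Δωsucc]
    | succ r ihr =>
      intro x y
      rw [show k+2 = (k+1)+1 from rfl, Δωsucc, ihr, ihk]
      ring

lemma phi_eq (m : ℕ) : φ (m + 1) = (m + 1) + (m + 1) ^ (m + 1) := by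
  unfold φ
  rw [dws]
  ring

theorem stmt_9 : ∀ P : Polynomial ℕ, ∃ n : ℕ, P.eval n < φ n := by
  intro P
  set d := P.natDegree with hd
  set C := ∑ i ∈ Finset.range (d + 1), P.coeff i with hC
  set n := max C d + 1 with hn
  refine ⟨n, ?_⟩
  have hn1 : 1 ≤ n := Nat.le_add_left 1 _
  have hCn : C < n := lt_of_le_of_lt (le_max_left _ _) (Nat.lt_succ_self _)
  have hdn : d + 1 ≤ n := Nat.succ_le_succ (le_max_right _ _)
  have heval : P.eval n ≤ C * n ^ d := by
    rw [Polynomial.eval_eq_sum_range, hC, Finset.sum_mul]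
    apply Finset.sum_le_sum
    intro i hi
    exact Nat.mul_le_mul_left _ (Nat.pow_le_pow_right hn1 (Nat.lt_succ_iff.mp (Finset.mem_range.mp hi)))
  have h1 : C * n ^ d < n ^ (d + 1) := by
    rw [pow_succ, mul_comm (n ^ d) n]
    exact Nat.mul_lt_mul_of_lt_of_le hCn (le_refl _) (Nat.pow_pos hn1)
  have h2 : (n : ℕ) ^ (d + 1) ≤ n ^ n := Nat.pow_le_pow_right hn1 hdn
  obtain ⟨m, hm⟩ : ∃ m, n = m + 1 := ⟨max C d, rfl⟩
  rw [hm, phi_eq]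
  rw [hm] at heval h1 h2
  omega
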